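/- arXiv:1202.5714 — 4 statements merged into one kernel-verified Lean document; each statement's English description precedes it below -/
import Mathlib

section
/- Let a group G act by isometries on a metric space K, and let H = {h_1,...,h_d} be a finite subset of G. Let P be a finite set of points of K all lying in a single G-orbit, with elements p_1,...,p_r, and choose g_i ∈ G with g_i · p_1 = p_i. Suppose each h_t moves each p_i a distance at most a, and suppose every ball of radius a around a point of K contains at most C_2 points of K (K is a discrete metric space with this uniform bound). Then there exists a subset I of {1,...,r} of cardinality at least r / C_2^d and points v_1,...,v_d in the ball of radius a around p_1 such that h_t · p_i = g_i · v_t for all t ∈ {1,...,d} and all i ∈ I. -/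
theorem stmt0 {G K : Type*} [Group G] [MetricSpace K] [MulAction G K]
    (hiso : ∀ (g : G) (x y : K), dist (g • x) (g • y) = dist x y)
    (d r : ℕ) (hr : 0 < r) (a : ℝ) (C₂ : ℕ)
    (h : Fin d → G) (p : Fin r → K) (g : Fin r → G)
    (hg : ∀ i, g i • p ⟨0, hr⟩ = p i)
    (hmove : ∀ (t : Fin d) (i : Fin r), dist (p i) (h t • p i) ≤ a)
    (hball : ∀ q : K, ({x : K | dist q x ≤ a}).Finite ∧ ({x : K | dist q x ≤ a}).ncard ≤ C₂) :
    ∃ (I : Finset (Fin r)) (v : Fin d → K),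
      (r : ℝ) / C₂ ^ d ≤ I.card ∧
      (∀ t, dist (p ⟨0, hr⟩) (v t) ≤ a) ∧
      ∀ t : Fin d, ∀ i ∈ I, h t • p i = g i • v t := by
  classical
  rcases Nat.eq_zero_or_pos d with hd | hd
  · subst hd
    refine ⟨Finset.univ, fun t => t.elim0, ?_, fun t => t.elim0, fun t => t.elim0⟩
    simp
  set p₁ := p ⟨0, hr⟩ with hp₁
  obtain ⟨hfin, hcard⟩ := hball p₁
  set S : Finset K := hfin.toFinset with hS
  have hSmem : ∀ x, x ∈ S ↔ dist p₁ x ≤ a := by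
    intro x; simp [hS]
  have hScard : S.card ≤ C₂ := by
    rwa [Set.ncard_eq_toFinset_card _ hfin] at hcard
  -- a is nonneg
  have ha : 0 ≤ a := le_trans dist_nonneg (hmove ⟨0, hd⟩ ⟨0, hr⟩)
  have hp₁S : p₁ ∈ S := by rw [hSmem]; simpa using ha
  -- the map
  set F : Fin r → (Fin d → K) := fun i t => (g i)⁻¹ • (h t • p i) with hF
  set T : Finset (Fin d → K) := Fintype.piFinset (fun _ => S) with hT
  have hmaps : ∀ i ∈ (Finset.univ : Finset (Fin r)), F i ∈ T := by
    intro i _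
    rw [hT, Fintype.mem_piFinset]
    intro t
    rw [hSmem]
    have : dist (g i • p₁) (g i • ((g i)⁻¹ • (h t • p i))) = dist p₁ ((g i)⁻¹ • (h t • p i)) :=
      hiso _ _ _
    rw [smul_inv_smul, hg i] at this
    rw [hF, ← this]
    exact hmove t i
  have hTne : T.Nonempty := ⟨fun _ => p₁, by rw [hT, Fintype.mem_piFinset]; intro; exact hp₁S⟩
  have hC₂ : 0 < C₂ := lt_of_lt_of_le (Finset.card_pos.mpr ⟨p₁, hp₁S⟩) hScard
  have hTcard : T.card ≤ C₂ ^ d := by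
    rw [hT, Fintype.card_piFinset]
    calc ∏ _i : Fin d, S.card ≤ ∏ _i : Fin d, C₂ :=
          Finset.prod_le_prod (fun _ _ => Nat.zero_le _) (fun _ _ => hScard)
      _ = C₂ ^ d := by simp
  have hpow : (0:ℝ) < (C₂:ℝ) ^ d := by positivity
  have hkey : T.card • ((r:ℝ) / C₂ ^ d) ≤ (Finset.univ : Finset (Fin r)).card := by
    rw [nsmul_eq_mul, Finset.card_univ, Fintype.card_fin]
    calc (T.card : ℝ) * ((r:ℝ) / C₂ ^ d) ≤ (C₂:ℝ) ^ d * ((r:ℝ) / C₂ ^ d) := by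
          apply mul_le_mul_of_nonneg_right
          · exact_mod_cast hTcard
          · positivity
      _ = r := by field_simp
  obtain ⟨v, hvT, hvcard⟩ :=
    Finset.exists_le_card_fiber_of_nsmul_le_card_of_maps_to hmaps hTne hkey
  refine ⟨{x ∈ (Finset.univ : Finset (Fin r)) | F x = v}, v, hvcard, ?_, ?_⟩
  · intro t
    rw [hT, Fintype.mem_piFinset] at hvT
    exact (hSmem _).mp (hvT t)
  · intro t i hi
    simp only [Finset.mem_filter] at hi
    have : F i t = v t := congrFun hi.2 t
    rw [hF] at this
    simp only at this
    rw [← this, smul_inv_smul]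
end

section
/- Let G be a group acting on a set X, H a subgroup, p ∈ X a point with trivial stabilizer (i.e., g · p = p implies g = 1). Suppose g_1, ..., g_r ∈ G and for each h ∈ H there exists v_h ∈ X with h · (g_i · p) = g_i · v_h for all 1 ≤ i ≤ r. Then for all i, j ∈ {1,...,r} and all h ∈ H, the element g_j · g_i⁻¹ commutes with h; in particular each g_j · g_i⁻¹ lies in the centralizer of H in G. -/
theorem stmt2 {G X : Type*} [Group G] [MulAction G X]
    (H : Subgroup G) (p : X) (hfree : ∀ g : G, g • p = p → g = 1)
    (r : ℕ) (g : Fin r → G) (v : G → X)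
    (hv : ∀ h ∈ H, ∀ i : Fin r, h • (g i • p) = g i • v h) :
    ∀ i j : Fin r, (∀ h ∈ H, (g j * (g i)⁻¹) * h = h * (g j * (g i)⁻¹)) ∧
      g j * (g i)⁻¹ ∈ Subgroup.centralizer (H : Set G) := by
  intro i j
  have key : ∀ h ∈ H, (g j * (g i)⁻¹) * h = h * (g j * (g i)⁻¹) := by
    intro h hh
    have hi : ((g i)⁻¹ * h * g i) • p = v h := by
      simp only [mul_smul, hv h hh i, inv_smul_smul]
    have hj : ((g j)⁻¹ * h * g j) • p = v h := by
      simp only [mul_smul, hv h hh j, inv_smul_smul]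
    have hcomb : (((g j)⁻¹ * h * g j)⁻¹ * ((g i)⁻¹ * h * g i)) • p = p := by
      rw [mul_smul, hi, ← hj, inv_smul_smul]
    have h2 : (g i)⁻¹ * h * g i = (g j)⁻¹ * h * g j :=
      (inv_mul_eq_one.mp (hfree _ hcomb)).symm
    calc g j * (g i)⁻¹ * h
        = g j * ((g i)⁻¹ * h * g i) * (g i)⁻¹ := by group
      _ = g j * ((g j)⁻¹ * h * g j) * (g i)⁻¹ := by rw [h2]
      _ = h * (g j * (g i)⁻¹) := by group
  exact ⟨key, fun h hh => (key h hh).symm⟩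
end

section
/- Let K be a δ-hyperbolic geodesic metric space (all geodesic triangles are δ-thin), let G be a group acting on K by isometries, and let H be a finite subgroup of G. Suppose x, y ∈ K satisfy diam(H · x) ≤ 6δ, diam(H · y) ≤ 6δ, and d(x,y) ≥ 20δ. Then for any point z on a geodesic [x,y] with d(x,z) ≥ 6δ + 1 and d(z,y) ≥ 6δ + 1, and any h ∈ H, one has d(z, h · z) ≤ 8δ. -/
/-- A geodesic from `x` to `y`, parametrized by arclength on `[0, dist x y]`. -/
def IsGeodesic {K : Type*} [MetricSpace K] (x y : K) (γ : ℝ → K) : Prop :=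
  γ 0 = x ∧ γ (dist x y) = y ∧
    ∀ s ∈ Set.Icc (0 : ℝ) (dist x y), ∀ t ∈ Set.Icc (0 : ℝ) (dist x y),
      dist (γ s) (γ t) = |s - t|

theorem stmt4 {G K : Type*} [Group G] [MetricSpace K] [MulAction G K] (δ : ℝ)
    (geod : ∀ a b : K, ∃ γ : ℝ → K, IsGeodesic a b γ)
    (thin : ∀ (a b c : K) (γab γbc γac : ℝ → K), IsGeodesic a b γab →
      IsGeodesic b c γbc → IsGeodesic a c γac →
      ∀ s ∈ Set.Icc (0 : ℝ) (dist a c),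
        ∃ u ∈ γab '' Set.Icc (0 : ℝ) (dist a b) ∪ γbc '' Set.Icc (0 : ℝ) (dist b c),
          dist (γac s) u ≤ δ)
    (hiso : ∀ (g : G) (x y : K), dist (g • x) (g • y) = dist x y)
    (H : Subgroup G) [Finite H] (x y : K)
    (hx : ∀ h ∈ H, ∀ h' ∈ H, dist (h • x) (h' • x) ≤ 6 * δ)
    (hy : ∀ h ∈ H, ∀ h' ∈ H, dist (h • y) (h' • y) ≤ 6 * δ)
    (hxy : 20 * δ ≤ dist x y)
    (γ : ℝ → K) (hγ : IsGeodesic x y γ)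
    (s : ℝ) (hs : s ∈ Set.Icc (0 : ℝ) (dist x y)) (z : K) (hz : z = γ s)
    (hzx : 6 * δ + 1 ≤ dist x z) (hzy : 6 * δ + 1 ≤ dist z y) :
    ∀ h ∈ H, dist z (h • z) ≤ 8 * δ := by
  intro h hH
  obtain ⟨γ0x, γdy, γiso⟩ := hγ
  have h0mem : (0:ℝ) ∈ Set.Icc (0:ℝ) (dist x y) := ⟨le_refl _, dist_nonneg⟩
  have hdmem : dist x y ∈ Set.Icc (0:ℝ) (dist x y) := ⟨dist_nonneg, le_refl _⟩
  have hsz : dist x z = s := by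
    have e := γiso 0 h0mem s hs
    rw [γ0x, ← hz] at e
    rw [e, abs_of_nonpos (by linarith [hs.1])]
    ring
  have hzyd : dist z y = dist x y - s := by
    have e := γiso s hs (dist x y) hdmem
    rw [γdy, ← hz] at e
    rw [e, abs_of_nonpos (by linarith [hs.2])]
    ring
  have hxhx : dist x (h • x) ≤ 6 * δ := by
    have := hx 1 (one_mem H) h hH
    simpa using this
  have hyhy : dist (h • y) y ≤ 6 * δ := by
    have := hy h hH 1 (one_mem H)
    simpa using this
  have hD : dist x (h • z) ≤ s + 6 * δ := by
    have t := dist_triangle x (h • x) (h • z)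
    rw [hiso h x z, hsz] at t
    linarith
  have hE : dist (h • z) y ≤ (dist x y - s) + 6 * δ := by
    have t := dist_triangle (h • z) (h • y) y
    rw [hiso h z y, hzyd] at t
    linarith
  obtain ⟨α, a0, aD, aiso⟩ := geod x (h • z)
  obtain ⟨β, b0, bE, biso⟩ := geod (h • z) y
  obtain ⟨u, hu, hdzu⟩ :=
    thin x (h • z) y α β γ ⟨a0, aD, aiso⟩ ⟨b0, bE, biso⟩ ⟨γ0x, γdy, γiso⟩ s hs
  rw [← hz] at hdzu
  rcases hu with ⟨r, hr, rfl⟩ | ⟨r, hr, rfl⟩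
  · have h1 : dist (α r) (h • z) = dist x (h • z) - r := by
      have e := aiso r hr (dist x (h • z)) ⟨dist_nonneg, le_refl _⟩
      rw [aD] at e
      rw [e, abs_of_nonpos (by linarith [hr.2])]
      ring
    have h2 : dist x (α r) = r := by
      have e := aiso 0 ⟨le_refl _, dist_nonneg⟩ r hr
      rw [a0] at e
      rw [e, abs_of_nonpos (by linarith [hr.1])]
      ring
    have h3 : dist x z ≤ dist x (α r) + dist (α r) z := dist_triangle _ _ _
    have h4 : dist z (h • z) ≤ dist z (α r) + dist (α r) (h • z) := dist_triangle _ _ _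
    rw [hsz, h2, dist_comm (α r) z] at h3
    linarith
  · have h1 : dist (h • z) (β r) = r := by
      have e := biso 0 ⟨le_refl _, dist_nonneg⟩ r hr
      rw [b0] at e
      rw [e, abs_of_nonpos (by linarith [hr.1])]
      ring
    have h2 : dist (β r) y = dist (h • z) y - r := by
      have e := biso r hr (dist (h • z) y) ⟨dist_nonneg, le_refl _⟩
      rw [bE] at e
      rw [e, abs_of_nonpos (by linarith [hr.2])]
      ring
    have h3 : dist z y ≤ dist z (β r) + dist (β r) y := dist_triangle _ _ _
    have h4 : dist z (h • z) ≤ dist z (β r) + dist (β r) (h • z) := dist_triangle _ _ _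
    rw [dist_comm (β r) (h • z), h1] at h4
    rw [hzyd, h2] at h3
    linarith
end

section
/- Let G be a hyperbolic group with Cayley graph K_G (with respect to a finite generating set) having hyperbolicity constant δ, and let H be a finite subgroup of G. Let X_H = {x ∈ K_G : diam(H·x) ≤ 6δ} where H acts by left multiplication. There exists a constant D, depending only on δ and the number of generators, such that if diam(X_H) ≥ D then the centralizer of H in G is infinite. -/
/-- Word length of `g` with respect to the generators `gen` (and their inverses). -/
noncomputable def wordLength {G : Type} [Group G] {n : ℕ} (gen : Fin n → G) (g : G) : ℕ :=
  sInf {k : ℕ | ∃ w : Fin k → G,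
    (∀ i, w i ∈ Set.range gen ∪ (Set.range gen)⁻¹) ∧ (List.ofFn w).prod = g}

noncomputable def gp {K : Type} [MetricSpace K] (q a b : K) : ℝ :=
  (dist q a + dist q b - dist a b) / 2

lemma gp_nonneg {K : Type} [MetricSpace K] (q a b : K) : 0 ≤ gp q a b := by
  have := dist_triangle a q b
  simp only [gp]
  rw [dist_comm a q] at this
  linarith

lemma gp_le_dist {K : Type} [MetricSpace K] (q a b : K) : gp q a b ≤ dist q b := by
  have := dist_triangle q a b
  have h2 := dist_triangle q b a
  simp only [gp]
  rw [dist_comm b a] at h2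
  linarith

lemma gp_comm {K : Type} [MetricSpace K] (q a b : K) : gp q a b = gp q b a := by
  simp only [gp]; rw [dist_comm a b]; ring

lemma gp_add {K : Type} [MetricSpace K] (q a b : K) : gp q a b + gp a q b = dist q a := by
  simp only [gp]; rw [dist_comm a q]; ring

section Geo
variable {K : Type} [MetricSpace K] {δ : ℝ}

lemma dist_to_geodesic
    (geod : ∀ a b : K, ∃ γ : ℝ → K, IsGeodesic a b γ)
    (thin : ∀ (a b c : K) (γab γbc γac : ℝ → K), IsGeodesic a b γab →
      IsGeodesic b c γbc → IsGeodesic a c γac →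
      ∀ s ∈ Set.Icc (0 : ℝ) (dist a c),
        ∃ u ∈ γab '' Set.Icc (0 : ℝ) (dist a b) ∪ γbc '' Set.Icc (0 : ℝ) (dist b c),
          dist (γac s) u ≤ δ)
    (a b c : K) (γ : ℝ → K) (hγ : IsGeodesic a c γ) (ρ : ℝ)
    (h0 : 0 ≤ ρ) (hρ : ρ ≤ gp a b c) :
    dist b (γ ρ) ≤ dist a b - ρ + 2 * δ := by
  obtain ⟨γab, hab⟩ := geod a b
  obtain ⟨γbc, hbc⟩ := geod b c
  have hρac : ρ ≤ dist a c := le_trans hρ (gp_le_dist a b c)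
  have hmem : ρ ∈ Set.Icc (0:ℝ) (dist a c) := ⟨h0, hρac⟩
  obtain ⟨u, hu, hdu⟩ := thin a b c γab γbc γ hab hbc hγ ρ hmem
  -- distances from endpoints to γ ρ
  have h0mem : (0:ℝ) ∈ Set.Icc (0:ℝ) (dist a c) := ⟨le_refl _, dist_nonneg⟩
  have hdmem : (dist a c) ∈ Set.Icc (0:ℝ) (dist a c) := ⟨dist_nonneg, le_refl _⟩
  have hda : dist a (γ ρ) = ρ := by
    have := hγ.2.2 0 h0mem ρ hmem
    rw [hγ.1] at this
    rw [this]; rw [abs_of_nonpos (by linarith)]; ring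
  have hdc : dist c (γ ρ) = dist a c - ρ := by
    have := hγ.2.2 (dist a c) hdmem ρ hmem
    rw [hγ.2.1] at this
    rw [this, abs_of_nonneg (by linarith)]
  rcases hu with ⟨r, hr, rfl⟩ | ⟨r, hr, rfl⟩
  · -- u on [a,b]
    have hau : dist a (γab r) = r := by
      have := hab.2.2 0 ⟨le_refl _, dist_nonneg⟩ r hr
      rw [hab.1] at this
      rw [this, abs_of_nonpos (by linarith [hr.1])]; ring
    have hbu : dist b (γab r) = dist a b - r := by
      have := hab.2.2 (dist a b) ⟨dist_nonneg, le_refl _⟩ r hr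
      rw [hab.2.1] at this
      rw [this, abs_of_nonneg (by linarith [hr.2])]
    have h1 : ρ - δ ≤ r := by
      linarith [dist_triangle a (γab r) (γ ρ), dist_comm (γ ρ) (γab r)]
    linarith [dist_triangle b (γab r) (γ ρ), dist_comm (γ ρ) (γab r)]
  · -- u on [b,c]
    have hbu : dist b (γbc r) = r := by
      have := hbc.2.2 0 ⟨le_refl _, dist_nonneg⟩ r hr
      rw [hbc.1] at this
      rw [this, abs_of_nonpos (by linarith [hr.1])]; ring
    have hcu : dist c (γbc r) = dist b c - r := by
      have := hbc.2.2 (dist b c) ⟨dist_nonneg, le_refl _⟩ r hr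
      rw [hbc.2.1] at this
      rw [this, abs_of_nonneg (by linarith [hr.2])]
    have h1 : r ≤ dist b c - dist a c + ρ + δ := by
      linarith [dist_triangle c (γbc r) (γ ρ), dist_comm (γ ρ) (γbc r)]
    have hgp : 2 * ρ ≤ dist a b + dist a c - dist b c := by
      have h5 : gp a b c = (dist a b + dist a c - dist b c)/2 := rfl
      rw [h5] at hρ; linarith
    linarith [dist_triangle b (γbc r) (γ ρ), dist_comm (γ ρ) (γbc r)]

lemma four_point
    (geod : ∀ a b : K, ∃ γ : ℝ → K, IsGeodesic a b γ)
    (thin : ∀ (a b c : K) (γab γbc γac : ℝ → K), IsGeodesic a b γab →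
      IsGeodesic b c γbc → IsGeodesic a c γac →
      ∀ s ∈ Set.Icc (0 : ℝ) (dist a c),
        ∃ u ∈ γab '' Set.Icc (0 : ℝ) (dist a b) ∪ γbc '' Set.Icc (0 : ℝ) (dist b c),
          dist (γac s) u ≤ δ) :
    ∀ w x y z : K, min (gp w x y) (gp w y z) - 2*δ ≤ gp w x z := by
  intro w x y z
  obtain ⟨γ, hγ⟩ := geod w y
  set ρ := min (gp w x y) (gp w y z) with hρdef
  have h0 : 0 ≤ ρ := le_min (gp_nonneg _ _ _) (gp_nonneg _ _ _)
  have hx : dist x (γ ρ) ≤ dist w x - ρ + 2*δ :=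
    dist_to_geodesic geod thin w x y γ hγ ρ h0 (min_le_left _ _)
  have hz : dist z (γ ρ) ≤ dist w z - ρ + 2*δ := by
    have : ρ ≤ gp w z y := by rw [gp_comm]; exact min_le_right _ _
    exact dist_to_geodesic geod thin w z y γ hγ ρ h0 this
  have htri := dist_triangle x (γ ρ) z
  rw [dist_comm (γ ρ) z] at htri
  simp only [gp]
  have : dist x z ≤ dist w x + dist w z - 2*ρ + 4*δ := by linarith
  linarith

end Geo

lemma chain_lemma {K : Type} [MetricSpace K] (δ c' t₁ : ℝ) (hδ : 0 ≤ δ) (hc' : 0 ≤ c')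
    (h4 : ∀ w x y z : K, min (gp w x y) (gp w y z) - 2*δ ≤ gp w x z)
    (p : ℕ → K) (hd : ∀ i, dist (p i) (p (i+1)) = t₁)
    (hgp : ∀ i, gp (p (i+1)) (p i) (p (i+2)) ≤ c')
    (ht : 2*c' + 4*δ + 1 ≤ t₁) :
    ∀ m : ℕ, (m : ℝ) ≤ dist (p 0) (p m) := by
  have key : ∀ m : ℕ, gp (p m) (p 0) (p (m+1)) ≤ c' + 2*δ ∧ (m : ℝ) ≤ dist (p 0) (p m) := by
    intro m
    induction m with
    | zero =>
      constructor
      · have : gp (p 0) (p 0) (p 1) = 0 := by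
          simp only [gp, dist_self]
          have := hd 0
          simp only [Nat.zero_add] at this ⊢
          rw [this]; ring
        rw [this]; positivity
      · simp
    | succ m ih =>
      obtain ⟨ihgp, ihd⟩ := ih
      -- distance growth first
      have hiden : dist (p 0) (p (m+1)) =
          dist (p 0) (p m) + t₁ - 2 * gp (p m) (p 0) (p (m+1)) := by
        simp only [gp]
        rw [dist_comm (p m) (p 0), hd m]
        ring
      have hdist : (m : ℝ) + 1 ≤ dist (p 0) (p (m+1)) := by
        rw [hiden]; linarith
      refine ⟨?_, by push_cast; linarith⟩
      -- Gromov product bound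
      have h4' := h4 (p (m+1)) (p m) (p 0) (p (m+2))
      have hA : gp (p (m+1)) (p m) (p 0) + gp (p m) (p (m+1)) (p 0) = t₁ := by
        rw [gp_add, dist_comm, hd m]
      have hAc : gp (p m) (p (m+1)) (p 0) = gp (p m) (p 0) (p (m+1)) := gp_comm _ _ _
      have hAlarge : gp (p (m+1)) (p m) (p 0) ≥ c' + 2*δ + 1 := by linarith
      have hmin := hgp m
      by_contra hB
      push_neg at hB
      have : min (gp (p (m+1)) (p m) (p 0)) (gp (p (m+1)) (p 0) (p (m+2))) > c' + 2*δ := by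
        rcases min_cases (gp (p (m+1)) (p m) (p 0)) (gp (p (m+1)) (p 0) (p (m+2))) with ⟨h, _⟩ | ⟨h, _⟩ <;> rw [h] <;> linarith
      linarith
  exact fun m => (key m).2


lemma word_count {G : Type} [Group G] {n : ℕ} (hn : 0 < n) (gen : Fin n → G)
    (hgen : ∀ g : G, {k : ℕ | ∃ w : Fin k → G,
      (∀ i, w i ∈ Set.range gen ∪ (Set.range gen)⁻¹) ∧ (List.ofFn w).prod = g}.Nonempty)
    (R : ℕ) :
    (Set.Finite {g : G | wordLength gen g ≤ R}) ∧
      Nat.card {g : G | wordLength gen g ≤ R} ≤ (R+1) * (n*2)^R := by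
  classical
  set toG : Fin n × Bool → G := fun p => if p.2 then gen p.1 else (gen p.1)⁻¹ with htoG
  set dec : (Fin (R+1) × (Fin R → Fin n × Bool)) → G := fun a =>
    (List.ofFn (fun i : Fin (a.1 : ℕ) =>
      toG (a.2 ⟨i, lt_of_lt_of_le i.isLt (Nat.lt_succ_iff.mp a.1.isLt)⟩))).prod with hdec
  have hsurj : ∀ g : G, wordLength gen g ≤ R → ∃ a, dec a = g := by
    intro g hg
    have hmem := Nat.sInf_mem (hgen g)
    set m := wordLength gen g with hm
    obtain ⟨w, hw, hprod⟩ := hmem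
    have hcode : ∀ i : Fin m, ∃ p : Fin n × Bool, toG p = w i := by
      intro i
      rcases hw i with ⟨j, hj⟩ | hinv
      · exact ⟨(j, true), by simp [htoG, hj]⟩
      · rw [Set.mem_inv] at hinv
        obtain ⟨j, hj⟩ := hinv
        exact ⟨(j, false), by simp [htoG]; rw [hj]; simp⟩
    choose c hc using hcode
    refine ⟨(⟨m, Nat.lt_succ_of_le hg⟩, fun j =>
      if h : (j : ℕ) < m then c ⟨j, h⟩ else (⟨0, hn⟩, true)), ?_⟩
    simp only [hdec]
    rw [← hprod]
    have hfun : (fun i : Fin m => toG (if h : (i : ℕ) < m then c ⟨i, h⟩ else (⟨0, hn⟩, true))) = w := by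
      funext i
      rw [dif_pos i.isLt]
      exact hc i
    exact congrArg List.prod (congrArg List.ofFn hfun)
  have hfin : Set.Finite {g : G | wordLength gen g ≤ R} := by
    apply Set.Finite.subset (Set.finite_range dec)
    intro g hg
    obtain ⟨a, ha⟩ := hsurj g hg
    exact ⟨a, ha⟩
  refine ⟨hfin, ?_⟩
  have hinj : ∃ f : {g : G | wordLength gen g ≤ R} → (Fin (R+1) × (Fin R → Fin n × Bool)),
      Function.Injective f := by
    refine ⟨fun g => Classical.choose (hsurj g.1 g.2), ?_⟩
    intro g1 g2 he
    dsimp only at he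
    have h1 := Classical.choose_spec (hsurj g1.1 g1.2)
    have h2 := Classical.choose_spec (hsurj g2.1 g2.2)
    apply Subtype.ext
    rw [← h1, ← h2, he]
  obtain ⟨f, hf⟩ := hinj
  haveI : Nonempty (Fin n) := ⟨⟨0, hn⟩⟩
  calc Nat.card {g : G | wordLength gen g ≤ R}
      ≤ Nat.card (Fin (R+1) × (Fin R → Fin n × Bool)) := Nat.card_le_card_of_injective f hf
    _ = (R+1) * (n*2)^R := by
        rw [Nat.card_eq_fintype_card]
        simp [Fintype.card_fun]


noncomputable def csC (δ : ℝ) : ℕ := ⌈2*δ⌉₊ + 4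
noncomputable def cTC (δ : ℝ) : ℕ := ⌈8*δ⌉₊ + 9 + csC δ
noncomputable def cRC (δ : ℝ) : ℕ := ⌈20*δ+2⌉₊
noncomputable def cBC (δ : ℝ) (n : ℕ) : ℕ := (cRC δ + 1) * (n*2)^(cRC δ)
noncomputable def cB2C (δ : ℝ) (n : ℕ) : ℕ := (csC δ + 1 + 1) * (n*2)^(csC δ + 1)
noncomputable def cMC (δ : ℝ) (n : ℕ) : ℕ := (cBC δ n)^(cBC δ n) * (cB2C δ n)
noncomputable def cDC (δ : ℝ) (n : ℕ) : ℝ := (csC δ : ℝ) + (((cMC δ n + 1) * cTC δ : ℕ) : ℝ) + 4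

set_option maxHeartbeats 2000000 in
theorem stmt9_aux (δ : ℝ) (n : ℕ) :
    ∃ D : ℝ, ∀ (G K : Type) [Group G] [MetricSpace K] [MulAction G K],
      ∀ (gen : Fin n → G), Subgroup.closure (Set.range gen) = ⊤ →
      ∀ (_hiso : ∀ (g : G) (x y : K), dist (g • x) (g • y) = dist x y)
        (_hfree : ∀ (g : G) (x : K), g • x = x → g = 1)
        (ι : G → K) (_hequiv : ∀ g g' : G, ι (g * g') = g • ι g')
        (_hword : ∀ g g' : G, dist (ι g) (ι g') = wordLength gen (g⁻¹ * g'))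
        (_hdense : ∀ x : K, ∃ g : G, dist x (ι g) ≤ 1 / 2)
        (_geod : ∀ a b : K, ∃ γ : ℝ → K, IsGeodesic a b γ)
        (_thin : ∀ (a b c : K) (γab γbc γac : ℝ → K), IsGeodesic a b γab →
          IsGeodesic b c γbc → IsGeodesic a c γac →
          ∀ s ∈ Set.Icc (0 : ℝ) (dist a c),
            ∃ u ∈ γab '' Set.Icc (0 : ℝ) (dist a b) ∪ γbc '' Set.Icc (0 : ℝ) (dist b c),
              dist (γac s) u ≤ δ)
        (H : Subgroup G), Finite H →
        ENNReal.ofReal D ≤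
          EMetric.diam {x : K | ∀ h ∈ H, ∀ h' ∈ H, dist (h • x) (h' • x) ≤ 6 * δ} →
        (Subgroup.centralizer (H : Set G) : Set G).Infinite := by
  classical
  refine ⟨cDC δ n, ?_⟩
  intro G K _ _ _ gen hgen _hiso _hfree ι _hequiv _hword _hdense _geod _thin H hHfin hdiam
  set X := {x : K | ∀ h ∈ H, ∀ h' ∈ H, dist (h • x) (h' • x) ≤ 6 * δ} with hXdef
  have hcs : (2:ℝ)*δ + 4 ≤ (csC δ : ℝ) := by
    have := Nat.le_ceil (2*δ)
    simp only [csC]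
    push_cast
    linarith
  have hcT : (8:ℝ)*δ + 9 + (csC δ : ℝ) ≤ (cTC δ : ℝ) := by
    have := Nat.le_ceil (8*δ)
    simp only [cTC]
    push_cast
    linarith
  have hcR : (20:ℝ)*δ + 2 ≤ (cRC δ : ℝ) := by
    have := Nat.le_ceil (20*δ+2)
    simp only [cRC]
    push_cast
    linarith
  have hD4 : (4:ℝ) ≤ cDC δ n := by
    have h1 : (0:ℝ) ≤ (csC δ : ℝ) := Nat.cast_nonneg _
    have h2 : (0:ℝ) ≤ (((cMC δ n + 1) * cTC δ : ℕ) : ℝ) := Nat.cast_nonneg _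
    simp only [cDC]
    linarith
  -- two far apart points
  have hex : ∃ x0 ∈ X, ∃ x1 ∈ X, cDC δ n - 1 ≤ dist x0 x1 := by
    by_contra hcon
    push_neg at hcon
    have hle : EMetric.diam X ≤ ENNReal.ofReal (cDC δ n - 1) := by
      apply EMetric.diam_le
      intro x hx y hy
      rw [edist_dist]
      exact ENNReal.ofReal_le_ofReal (le_of_lt (hcon x hx y hy))
    have h2 := le_trans hdiam hle
    rw [ENNReal.ofReal_le_ofReal_iff (by linarith)] at h2
    linarith
  obtain ⟨x0, hx0, x1, hx1, hx01⟩ := hex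
  have hδ0 : 0 ≤ δ := by
    have := hx0 1 H.one_mem 1 H.one_mem
    simp only [one_smul, dist_self] at this
    linarith
  -- n is positive
  rcases Nat.eq_zero_or_pos n with hn0 | hn
  · exfalso
    have htriv : ∀ g : G, g = 1 := by
      intro g
      have hg : g ∈ Subgroup.closure (Set.range gen) := by rw [hgen]; trivial
      subst hn0
      rw [Set.range_eq_empty, Subgroup.closure_empty] at hg
      exact hg
    obtain ⟨g0, hg0⟩ := _hdense x0
    obtain ⟨g1, hg1⟩ := _hdense x1
    have : g0 = g1 := by rw [htriv g0, htriv g1]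
    subst this
    have := dist_triangle x0 (ι g0) x1
    rw [dist_comm (ι g0) x1] at this
    have hd : dist x0 x1 ≤ 1 := by linarith
    linarith
  -- every element has a word
  have hgenword : ∀ g : G, {k : ℕ | ∃ w : Fin k → G,
      (∀ i, w i ∈ Set.range gen ∪ (Set.range gen)⁻¹) ∧ (List.ofFn w).prod = g}.Nonempty := by
    intro g
    have hg : g ∈ Subgroup.closure (Set.range gen) := by rw [hgen]; trivial
    have hg2 : g ∈ Submonoid.closure (Set.range gen ∪ (Set.range gen)⁻¹) := by
      rw [← Subgroup.closure_toSubmonoid]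
      exact hg
    obtain ⟨l, hl, hlp⟩ := Submonoid.exists_list_of_mem_closure hg2
    refine ⟨l.length, fun i => l.get i, fun i => hl _ (l.get_mem i), ?_⟩
    rw [List.ofFn_get]
    exact hlp
  -- geodesic between the two far points
  obtain ⟨γ, hγ⟩ := _geod x0 x1
  set L := dist x0 x1 with hLdef
  -- choose group elements near integer points of the geodesic
  have hgk' : ∀ k : ℕ, ∃ g : G, dist (γ k) (ι g) ≤ 1/2 := fun k => _hdense (γ k)
  choose gk hgk using hgk'
  -- distances between the chosen elements
  have hγd : ∀ a b : ℝ, 0 ≤ a → a ≤ L → 0 ≤ b → b ≤ L → dist (γ a) (γ b) = |a - b| :=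
    fun a b ha hb hc hd => hγ.2.2 a ⟨ha, hb⟩ b ⟨hc, hd⟩
  have hgdist : ∀ k l : ℕ, (k:ℝ) ≤ L → (l:ℝ) ≤ L →
      abs (dist (ι (gk k)) (ι (gk l)) - abs ((k:ℝ) - (l:ℝ))) ≤ 1 := by
    intro k l hk hl
    have h1 : dist (γ k) (γ l) = |(k:ℝ) - (l:ℝ)| :=
      hγd k l (Nat.cast_nonneg _) hk (Nat.cast_nonneg _) hl
    have h2 := dist_triangle4 (ι (gk k)) (γ k) (γ l) (ι (gk l))
    have h3 := dist_triangle4 (γ k) (ι (gk k)) (ι (gk l)) (γ l)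
    rw [abs_le]
    rw [dist_comm (γ k) (ι (gk k)), dist_comm (ι (gk l)) (γ l), h1] at h3
    rw [dist_comm (ι (gk k)) (γ k), h1] at h2
    have e1 := dist_comm (ι (gk k)) (γ (k:ℝ))
    have e2 := dist_comm (ι (gk l)) (γ (l:ℝ))
    exact ⟨by linarith [hgk k, hgk l], by linarith [hgk k, hgk l]⟩
  have hγL : γ L = x1 := by rw [hLdef]; exact hγ.2.1
  have hL0 : 0 ≤ L := hLdef ▸ dist_nonneg
  have hmove : ∀ h : G, h ∈ H → ∀ t : ℝ, 0 ≤ t → t ≤ L → dist (h • γ t) (γ t) ≤ 14*δ := by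
    intro h hh t ht0 ht1
    have hb0 : dist (h • x0) x0 ≤ 6*δ := by
      have := hx0 h hh 1 H.one_mem
      rwa [one_smul] at this
    have hb1 : dist (h • x1) x1 ≤ 6*δ := by
      have := hx1 h hh 1 H.one_mem
      rwa [one_smul] at this
    have hpt0 : dist x0 (γ t) = t := by
      have h5 := hγd 0 t le_rfl hL0 ht0 ht1
      rw [hγ.1] at h5
      rw [h5, abs_of_nonpos (by linarith)]
      ring
    have hpt1 : dist x1 (γ t) = L - t := by
      have h5 := hγd L t hL0 le_rfl ht0 ht1
      rw [hγL] at h5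
      rw [h5, abs_of_nonneg (by linarith)]
    have e0 : dist (h • γ t) (h • x0) = t := by rw [_hiso, dist_comm, hpt0]
    have e1 : dist (h • γ t) (h • x1) = L - t := by rw [_hiso, dist_comm, hpt1]
    have hgp1 : gp (h • γ t) x0 x1 ≤ 6*δ := by
      have t0 := dist_triangle (h • γ t) (h • x0) x0
      have t1 := dist_triangle (h • γ t) (h • x1) x1
      simp only [gp]
      linarith [hLdef]
    set ρ := gp x0 (h • γ t) x1 with hρdef
    have hρ0 : 0 ≤ ρ := gp_nonneg _ _ _
    have hρL : ρ ≤ L := by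
      have := gp_le_dist x0 (h • γ t) x1
      linarith [hLdef]
    have hkey := dist_to_geodesic _geod _thin x0 (h • γ t) x1 γ hγ ρ hρ0 le_rfl
    have hid : dist x0 (h • γ t) - ρ = gp (h • γ t) x0 x1 := by
      simp only [hρdef, gp]
      rw [dist_comm x0 (h • γ t)]
      ring
    have hclose : dist (h • γ t) (γ ρ) ≤ 8*δ := by linarith
    have hρt : |ρ - t| ≤ 6*δ := by
      have t0 := dist_triangle (h • γ t) (h • x0) x0
      have t0' := dist_triangle (h • x0) x0 (h • γ t)
      have t1 := dist_triangle (h • γ t) (h • x1) x1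
      have t1' := dist_triangle (h • x1) x1 (h • γ t)
      have c0 := dist_comm (h • x0) (h • γ t)
      have c1 := dist_comm (h • x1) (h • γ t)
      have c2 := dist_comm (h • x0) x0
      have c3 := dist_comm (h • x1) x1
      have c4 := dist_comm x0 (h • γ t)
      have c5 := dist_comm x1 (h • γ t)
      have hρform : ρ = (dist x0 (h • γ t) + dist x0 x1 - dist (h • γ t) x1)/2 := by
        simp only [hρdef, gp]
      rw [abs_le]
      constructor
      · rw [hρform]; linarith [hLdef]
      · rw [hρform]; linarith [hLdef]
    have hfin : dist (γ ρ) (γ t) = |ρ - t| := hγd ρ t hρ0 hρL ht0 ht1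
    calc dist (h • γ t) (γ t) ≤ dist (h • γ t) (γ ρ) + dist (γ ρ) (γ t) := dist_triangle _ _ _
      _ ≤ 8*δ + 6*δ := by rw [hfin]; exact add_le_add hclose hρt
      _ = 14*δ := by ring
  -- word length of conjugates
  have hwl1 : ∀ h : G, h ∈ H → ∀ k : ℕ, (k:ℝ) ≤ L →
      wordLength gen ((gk k)⁻¹ * (h * gk k)) ≤ cRC δ := by
    intro h hh k hk
    have hdd : dist (ι (gk k)) (ι (h * gk k)) ≤ 14*δ + 1 := by
      have h1 := dist_triangle4 (ι (gk k)) (γ k) (h • γ k) (ι (h * gk k))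
      have h2 : dist (h • γ (k:ℝ)) (ι (h * gk k)) = dist (γ (k:ℝ)) (ι (gk k)) := by
        rw [_hequiv, _hiso]
      have h3 := hmove h hh k (Nat.cast_nonneg _) hk
      have h4 := dist_comm (γ (k:ℝ)) (h • γ (k:ℝ))
      linarith [hgk k, dist_comm (ι (gk k)) (γ (k:ℝ))]
    rw [_hword (gk k) (h * gk k)] at hdd
    have : (wordLength gen ((gk k)⁻¹ * (h * gk k)) : ℝ) ≤ (cRC δ : ℝ) := by linarith
    exact_mod_cast this
  have hwl2 : ∀ k : ℕ, csC δ ≤ k → (k:ℝ) ≤ L →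
      wordLength gen ((gk k)⁻¹ * gk (k - csC δ)) ≤ csC δ + 1 := by
    intro k hks hk
    have hcast : ((k - csC δ : ℕ) : ℝ) = (k:ℝ) - (csC δ:ℝ) := by
      push_cast [Nat.cast_sub hks]
      ring
    have hks' : ((k - csC δ : ℕ):ℝ) ≤ L := by
      rw [hcast]
      have : (0:ℝ) ≤ (csC δ:ℝ) := Nat.cast_nonneg _
      linarith
    have hdd := hgdist k (k - csC δ) hk hks'
    rw [hcast] at hdd
    have habs : |(k:ℝ) - ((k:ℝ) - (csC δ:ℝ))| = (csC δ:ℝ) := by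
      rw [abs_of_nonneg (by simp [Nat.cast_nonneg])]
      ring
    rw [habs] at hdd
    rw [_hword (gk k) (gk (k - csC δ))] at hdd
    have : (wordLength gen ((gk k)⁻¹ * gk (k - csC δ)) : ℝ) ≤ ((csC δ + 1 : ℕ) : ℝ) := by
      rw [abs_le] at hdd
      push_cast
      linarith [hdd.2]
    exact_mod_cast this
  -- finite balls
  obtain ⟨hB1fin, hB1card⟩ := word_count hn gen hgenword (cRC δ)
  obtain ⟨hB2fin, hB2card⟩ := word_count hn gen hgenword (csC δ + 1)
  set B1 := {g : G | wordLength gen g ≤ cRC δ} with hB1def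
  set B2 := {g : G | wordLength gen g ≤ csC δ + 1} with hB2def
  haveI : Finite ↥B1 := hB1fin.to_subtype
  haveI : Finite ↥B2 := hB2fin.to_subtype
  -- index bound: all sample indices are at most L
  have hidx : ∀ j : ℕ, j ≤ cMC δ n → ((csC δ + j * cTC δ : ℕ) : ℝ) ≤ L := by
    intro j hj
    have h1 : ((csC δ + j * cTC δ : ℕ) : ℝ) ≤ ((csC δ + cMC δ n * cTC δ : ℕ) : ℝ) := by
      push_cast
      have : (j:ℝ) * cTC δ ≤ (cMC δ n : ℝ) * cTC δ :=
        mul_le_mul_of_nonneg_right (by exact_mod_cast hj) (Nat.cast_nonneg _)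
      linarith
    have h2 : ((csC δ + cMC δ n * cTC δ : ℕ) : ℝ) ≤ cDC δ n - 4 := by
      simp only [cDC]
      push_cast
      nlinarith [Nat.cast_nonneg (cTC δ) (α := ℝ)]
    linarith
  -- cardinality of H
  have hcardH : Nat.card ↥H ≤ cBC δ n := by
    have hsL : ((csC δ : ℕ) : ℝ) ≤ L := by
      have := hidx 0 (Nat.zero_le _)
      simpa using this
    have hf : Function.Injective (fun h : ↥H =>
        (⟨(gk (csC δ))⁻¹ * ((h : G) * gk (csC δ)), hwl1 h h.2 (csC δ) hsL⟩ : ↥B1)) := by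
      intro h1 h2 he
      have h3 : (gk (csC δ))⁻¹ * ((h1 : G) * gk (csC δ)) =
          (gk (csC δ))⁻¹ * ((h2 : G) * gk (csC δ)) := congrArg Subtype.val he
      have h5 := mul_left_cancel h3
      exact Subtype.ext (mul_right_cancel h5)
    calc Nat.card ↥H ≤ Nat.card ↥B1 := Nat.card_le_card_of_injective _ hf
      _ ≤ cBC δ n := hB1card
  -- the invariant data along the geodesic
  set Φ : ℕ → (↥H → G) × G := fun k =>
    (fun h => (gk k)⁻¹ * ((h : G) * gk k), (gk k)⁻¹ * gk (k - csC δ)) with hΦdef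
  set Z : Set ((↥H → G) × G) := {q | (∀ h : ↥H, q.1 h ∈ B1) ∧ q.2 ∈ B2} with hZdef
  -- Z is finite with controlled cardinality
  have hψ : Function.Injective (fun q : ↥Z =>
      ((fun h => (⟨q.1.1 h, q.2.1 h⟩ : ↥B1), (⟨q.1.2, q.2.2⟩ : ↥B2)) :
        (↥H → ↥B1) × ↥B2)) := by
    intro q1 q2 he
    have h1 := congrArg Prod.fst he
    have h2 := congrArg Prod.snd he
    simp only at h1 h2
    apply Subtype.ext
    apply Prod.ext
    · funext h
      have := congrFun h1 h
      exact congrArg Subtype.val this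
    · exact congrArg Subtype.val h2
  haveI hZfinite : Finite ↥Z := Finite.of_injective _ hψ
  have hZcard : Nat.card ↥Z ≤ cMC δ n := by
    have h1 : Nat.card ↥Z ≤ Nat.card ((↥H → ↥B1) × ↥B2) :=
      Nat.card_le_card_of_injective _ hψ
    have h2 : Nat.card ((↥H → ↥B1) × ↥B2) = Nat.card ↥B1 ^ Nat.card ↥H * Nat.card ↥B2 := by
      rw [Nat.card_prod, Nat.card_fun]
    have hB1pos : 1 ≤ cBC δ n := by
      have h0 : 0 < (n*2)^(cRC δ) := Nat.pow_pos (by omega)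
      exact Nat.succ_le_of_lt (Nat.mul_pos (Nat.succ_pos _) h0)
    have h3 : Nat.card ↥B1 ^ Nat.card ↥H ≤ cBC δ n ^ cBC δ n := by
      calc Nat.card ↥B1 ^ Nat.card ↥H ≤ cBC δ n ^ Nat.card ↥H :=
            Nat.pow_le_pow_left hB1card _
        _ ≤ cBC δ n ^ cBC δ n := Nat.pow_le_pow_right hB1pos hcardH
    calc Nat.card ↥Z ≤ Nat.card ↥B1 ^ Nat.card ↥H * Nat.card ↥B2 := by rw [← h2]; exact h1
      _ ≤ cBC δ n ^ cBC δ n * cB2C δ n := Nat.mul_le_mul h3 hB2card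
      _ = cMC δ n := rfl
  -- the sampled data lies in Z
  have hFZ : ∀ j : ℕ, j ≤ cMC δ n → Φ (csC δ + j * cTC δ) ∈ Z := by
    intro j hj
    constructor
    · intro h
      exact hwl1 h h.2 _ (hidx j hj)
    · exact hwl2 _ (Nat.le_add_right _ _) (hidx j hj)
  -- pigeonhole: two indices with the same data
  have hcollide : ∃ j1 j2 : ℕ, j1 < j2 ∧ j2 ≤ cMC δ n ∧
      Φ (csC δ + j1 * cTC δ) = Φ (csC δ + j2 * cTC δ) := by
    by_contra hcon
    push_neg at hcon
    have hinj : Function.Injective (fun j : Fin (cMC δ n + 1) =>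
        (⟨Φ (csC δ + j.1 * cTC δ), hFZ j.1 (Nat.lt_succ_iff.mp j.2)⟩ : ↥Z)) := by
      intro j1 j2 he
      have he' : Φ (csC δ + j1.1 * cTC δ) = Φ (csC δ + j2.1 * cTC δ) :=
        congrArg Subtype.val he
      by_contra hne
      have hne' : j1.1 ≠ j2.1 := fun hc => hne (Fin.ext hc)
      rcases Nat.lt_or_ge j1.1 j2.1 with hlt | hge
      · exact hcon j1.1 j2.1 hlt (Nat.lt_succ_iff.mp j2.2) he'
      · have hlt2 : j2.1 < j1.1 := Nat.lt_of_le_of_ne hge (Ne.symm hne')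
        exact hcon j2.1 j1.1 hlt2 (Nat.lt_succ_iff.mp j1.2) he'.symm
    have h8 := Nat.card_le_card_of_injective _ hinj
    rw [Nat.card_eq_fintype_card, Fintype.card_fin] at h8
    have h9 := le_trans h8 hZcard
    omega
  obtain ⟨j1, j2, hj12, hj2M, hΦeq⟩ := hcollide
  set k := csC δ + j1 * cTC δ with hkdef
  set l := csC δ + j2 * cTC δ with hldef
  have hkl : k + cTC δ ≤ l := by
    have h1 : (j1 + 1) * cTC δ ≤ j2 * cTC δ := Nat.mul_le_mul_right _ hj12
    have h2 : (j1 + 1) * cTC δ = j1 * cTC δ + cTC δ := by ring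
    simp only [hkdef, hldef]
    omega
  have hkL : (k:ℝ) ≤ L := hidx j1 (le_of_lt (lt_of_lt_of_le hj12 hj2M))
  have hlL : (l:ℝ) ≤ L := hidx j2 hj2M
  have hsk : csC δ ≤ k := Nat.le_add_right _ _
  have hsl : csC δ ≤ l := Nat.le_add_right _ _
  have hconj : ∀ h : ↥H, (gk k)⁻¹ * ((h:G) * gk k) = (gk l)⁻¹ * ((h:G) * gk l) :=
    fun h => congrFun (congrArg Prod.fst hΦeq) h
  have hback : (gk k)⁻¹ * gk (k - csC δ) = (gk l)⁻¹ * gk (l - csC δ) :=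
    congrArg Prod.snd hΦeq
  set z := gk l * (gk k)⁻¹ with hzdef
  have hzcent : z ∈ Subgroup.centralizer (H : Set G) := by
    rw [Subgroup.mem_centralizer_iff]
    intro g hg
    have he := hconj ⟨g, hg⟩
    simp only at he
    calc g * z = gk l * ((gk l)⁻¹ * (g * gk l)) * (gk k)⁻¹ := by rw [hzdef]; group
      _ = gk l * ((gk k)⁻¹ * (g * gk k)) * (gk k)⁻¹ := by rw [he]
      _ = z * g := by rw [hzdef]; group
  have hz_x : z • ι (gk k) = ι (gk l) := by
    rw [← _hequiv]
    exact congrArg ι (by rw [hzdef]; group)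
  have hz_a : z • ι (gk (k - csC δ)) = ι (gk (l - csC δ)) := by
    rw [← _hequiv]
    refine congrArg ι ?_
    calc z * gk (k - csC δ) = gk l * ((gk k)⁻¹ * gk (k - csC δ)) := by rw [hzdef]; group
      _ = gk l * ((gk l)⁻¹ * gk (l - csC δ)) := by rw [hback]
      _ = gk (l - csC δ) := by group
  -- real constants
  set sR := (csC δ : ℝ) with hsRdef
  set t0 := (l:ℝ) - (k:ℝ) with ht0def
  have hsR0 : 0 ≤ sR := Nat.cast_nonneg _
  have hT0 : (cTC δ : ℝ) ≤ t0 := by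
    have := (Nat.cast_le (α := ℝ)).mpr hkl
    push_cast at this
    simp only [ht0def]
    linarith
  have hTs : sR + 9 ≤ (cTC δ : ℝ) := by
    simp only [hsRdef]
    linarith
  have ht0s : sR + 9 ≤ t0 := le_trans hTs hT0
  have hcastk : ((k - csC δ : ℕ) : ℝ) = (k:ℝ) - sR := by
    push_cast [Nat.cast_sub hsk]
    ring
  have hcastl : ((l - csC δ : ℕ) : ℝ) = (l:ℝ) - sR := by
    push_cast [Nat.cast_sub hsl]
    ring
  have hksL : ((k - csC δ : ℕ) : ℝ) ≤ L := by rw [hcastk]; linarith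
  have hlsL : ((l - csC δ : ℕ) : ℝ) ≤ L := by rw [hcastl]; linarith
  -- the four distance estimates
  set x := ι (gk k) with hxdef
  set a := ι (gk (k - csC δ)) with hadef
  have d_xl : |dist x (ι (gk l)) - t0| ≤ 1 := by
    have h1 := hgdist k l hkL hlL
    have h2 : |(k:ℝ) - (l:ℝ)| = t0 := by
      rw [abs_of_nonpos (by simp only [ht0def] at *; linarith)]
      simp only [ht0def]; ring
    rwa [h2] at h1
  have d_ax : |dist a x - sR| ≤ 1 := by
    have h1 := hgdist (k - csC δ) k hksL hkL
    have h2 : |((k - csC δ:ℕ):ℝ) - (k:ℝ)| = sR := by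
      rw [hcastk, abs_of_nonpos (by linarith)]; ring
    rwa [h2] at h1
  have d_al : |dist a (ι (gk l)) - (t0 + sR)| ≤ 1 := by
    have h1 := hgdist (k - csC δ) l hksL hlL
    have h2 : |((k - csC δ:ℕ):ℝ) - (l:ℝ)| = t0 + sR := by
      rw [hcastk, abs_of_nonpos (by simp only [ht0def] at *; linarith)]
      simp only [ht0def]; ring
    rwa [h2] at h1
  have d_xls : |dist x (ι (gk (l - csC δ))) - (t0 - sR)| ≤ 1 := by
    have h1 := hgdist k (l - csC δ) hkL hlsL
    have h2 : |(k:ℝ) - ((l - csC δ:ℕ):ℝ)| = t0 - sR := by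
      rw [hcastl, abs_of_nonpos (by simp only [ht0def] at *; linarith)]
      simp only [ht0def]; ring
    rwa [h2] at h1
  -- the displaced point w
  set w := z⁻¹ • x with hwdef
  set t1 := dist x (z • x) with ht1def
  have dwx : dist w x = t1 := by
    have h1 := _hiso z (z⁻¹ • x) x
    rw [smul_inv_smul] at h1
    rw [hwdef, ht1def, ← h1]
  have dwa : dist w a = dist x (ι (gk (l - csC δ))) := by
    have h1 := _hiso z (z⁻¹ • x) a
    rw [smul_inv_smul, hz_a] at h1
    rw [hwdef, ← h1]
  have dzx : dist x (z • x) = dist x (ι (gk l)) := by rw [hz_x]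
  have ht1b : |t1 - t0| ≤ 1 := by rw [ht1def, dzx]; exact d_xl
  -- Gromov product bound at a
  have habs : ∀ u v : ℝ, |u - v| ≤ 1 → u ≤ v + 1 ∧ v - 1 ≤ u := by
    intro u v h
    rw [abs_le] at h
    exact ⟨by linarith [h.2], by linarith [h.1]⟩
  have hP : gp a w (z • x) ≤ 2*δ + 3/2 := by
    have c1 : gp a w x ≤ 3/2 := by
      have e1 := dist_comm a w
      have e2 := (habs _ _ d_xls).1
      have e3 := (habs _ _ d_ax).1
      have e4 := (habs _ _ ht1b).2
      simp only [gp]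
      rw [e1, dwa, dwx]
      linarith
    have c2 : 2*δ + 5/2 ≤ gp a (z • x) x := by
      have e2 := (habs _ _ d_al).2
      have e3 := (habs _ _ d_ax).2
      have e4 := (habs _ _ ht1b).1
      have e5 := dist_comm (z • x) x
      simp only [gp]
      rw [e5, ← ht1def]
      have e6 : dist a (z • x) = dist a (ι (gk l)) := by rw [hz_x]
      rw [e6]
      linarith
    by_contra hcon
    push_neg at hcon
    have h4p := four_point _geod _thin a w (z • x) x
    have hmin : 2*δ + 3/2 < min (gp a w (z • x)) (gp a (z • x) x) :=
      lt_min hcon (by linarith)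
    linarith
  have hwzx : 2*t0 - 4*δ - 5 ≤ dist w (z • x) := by
    have hiden : dist w (z • x) = dist a w + dist a (z • x) - 2 * gp a w (z • x) := by
      simp only [gp]
      ring
    have e1 := dist_comm a w
    have e2 := (habs _ _ d_xls).2
    have e6 : dist a (z • x) = dist a (ι (gk l)) := by rw [hz_x]
    have e3 := (habs _ _ d_al).2
    rw [hiden, e1, dwa, e6]
    linarith
  have hcb : gp x w (z • x) ≤ 2*δ + 7/2 := by
    have e1 := dist_comm x w
    have e4 := (habs _ _ ht1b).1
    simp only [gp]
    rw [e1, dwx, ← ht1def]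
    linarith
  -- the chain of iterates
  set p : ℕ → K := fun i => (z^i) • x with hpdef
  have hd : ∀ i : ℕ, dist (p i) (p (i+1)) = t1 := by
    intro i
    have h1 : p (i+1) = (z^i) • (z • x) := by
      rw [hpdef]
      simp only
      rw [pow_succ, mul_smul]
    rw [h1, hpdef]
    simp only
    rw [_hiso, ht1def]
  have hgpc : ∀ i : ℕ, gp (p (i+1)) (p i) (p (i+2)) ≤ 2*δ + 7/2 := by
    intro i
    have h1 : p i = (z^(i+1)) • w := by
      rw [hpdef, hwdef]
      simp only
      rw [← mul_smul, pow_succ, mul_inv_cancel_right]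
    have h2 : p (i+2) = (z^(i+1)) • (z • x) := by
      rw [hpdef]
      simp only
      rw [pow_succ, mul_smul]
    have h3 : p (i+1) = (z^(i+1)) • x := rfl
    rw [h1, h2, h3]
    have hinv : gp ((z^(i+1)) • x) ((z^(i+1)) • w) ((z^(i+1)) • (z • x)) = gp x w (z • x) := by
      simp only [gp]
      rw [_hiso, _hiso, _hiso]
    rw [hinv]
    exact hcb
  have ht1big : 2*(2*δ + 7/2) + 4*δ + 1 ≤ t1 := by
    have e4 := (habs _ _ ht1b).2
    linarith
  have hchain := chain_lemma δ (2*δ + 7/2) t1 hδ0 (by linarith)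
    (four_point _geod _thin) p hd hgpc ht1big
  -- conclusion
  have hpow : ∀ m : ℕ, 1 ≤ m → z^m ≠ 1 := by
    intro m hm hzm
    have hp0 : p 0 = x := by rw [hpdef]; simp
    have hpm : p m = x := by rw [hpdef]; simp [hzm]
    have h1 := hchain m
    rw [hp0, hpm, dist_self] at h1
    have : (1:ℝ) ≤ (m:ℝ) := by exact_mod_cast hm
    linarith
  apply Set.infinite_of_injective_forall_mem (f := fun m : ℕ => z^m)
  · intro i j he
    simp only at he
    by_contra hne
    rcases Nat.lt_or_ge i j with hlt | hge
    · have h1 : z^i * z^(j-i) = z^j := by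
        rw [← pow_add]
        congr 1
        omega
      rw [← he] at h1
      have h3 : z^i * z^(j-i) = z^i * 1 := by rw [mul_one]; exact h1
      exact hpow (j-i) (by omega) (mul_left_cancel h3)
    · have hlt : j < i := Nat.lt_of_le_of_ne hge (fun hc => hne (hc ▸ rfl))
      have h1 : z^j * z^(i-j) = z^i := by
        rw [← pow_add]
        congr 1
        omega
      rw [he] at h1
      have h3 : z^j * z^(i-j) = z^j * 1 := by rw [mul_one]; exact h1
      exact hpow (i-j) (by omega) (mul_left_cancel h3)
  · intro m
    exact SetLike.mem_coe.mpr (Subgroup.pow_mem _ hzcent m)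


theorem stmt9 (δ : ℝ) (n : ℕ) :
    ∃ D : ℝ, ∀ (G K : Type) [Group G] [MetricSpace K] [MulAction G K],
      ∀ (gen : Fin n → G), Subgroup.closure (Set.range gen) = ⊤ →
      ∀ (_hiso : ∀ (g : G) (x y : K), dist (g • x) (g • y) = dist x y)
        (_hfree : ∀ (g : G) (x : K), g • x = x → g = 1)
        (ι : G → K) (_hequiv : ∀ g g' : G, ι (g * g') = g • ι g')
        (_hword : ∀ g g' : G, dist (ι g) (ι g') = wordLength gen (g⁻¹ * g'))
        (_hdense : ∀ x : K, ∃ g : G, dist x (ι g) ≤ 1 / 2)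
        (_geod : ∀ a b : K, ∃ γ : ℝ → K, IsGeodesic a b γ)
        (_thin : ∀ (a b c : K) (γab γbc γac : ℝ → K), IsGeodesic a b γab →
          IsGeodesic b c γbc → IsGeodesic a c γac →
          ∀ s ∈ Set.Icc (0 : ℝ) (dist a c),
            ∃ u ∈ γab '' Set.Icc (0 : ℝ) (dist a b) ∪ γbc '' Set.Icc (0 : ℝ) (dist b c),
              dist (γac s) u ≤ δ)
        (H : Subgroup G), Finite H →
        ENNReal.ofReal D ≤
          EMetric.diam {x : K | ∀ h ∈ H, ∀ h' ∈ H, dist (h • x) (h' • x) ≤ 6 * δ} →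
        (Subgroup.centralizer (H : Set G) : Set G).Infinite := by
  exact stmt9_aux δ n
end
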